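/- Let W̃ = ℤ^n ⋊ S_n be the extended affine Weyl group of GL_n, with length function ℓ(w₀φ^λ) = Σ_{α ∈ Φ₊, w₀α ∈ Φ₋} |⟨α, λ⟩ + 1| + Σ_{α ∈ Φ₊, w₀α ∈ Φ₊} |⟨α, λ⟩|. Every w ∈ W̃ can be written uniquely as w = x φ^μ y with μ dominant, x, y ∈ S_n, and φ^μ y of minimal length in W₀·(φ^μ y); for this decomposition, ℓ(w) = ℓ(x) + ⟨μ, 2ρ⟩ − ℓ(y), where 2ρ is the sum of positive roots. -/

import Mathlib

/-- The length function on W̃ = ℤ^n ⋊ S_n: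
ℓ(w₀ φ^λ) = Σ_{i<j, w₀(i)>w₀(j)} |λ(i) − λ(j) + 1| + Σ_{i<j, w₀(i)<w₀(j)} |λ(i) − λ(j)|.
Here the element w₀ φ^λ is encoded by the pair (w₀, λ). -/
noncomputable def affLen {n : ℕ} (w₀ : Equiv.Perm (Fin n)) (lam : Fin n → ℤ) : ℤ :=
  ∑ p ∈ Finset.univ.filter (fun p : Fin n × Fin n => p.1 < p.2),
    (if w₀ p.2 < w₀ p.1 then |lam p.1 - lam p.2 + 1| else |lam p.1 - lam p.2|)

/-- (x, μ, y) is the decomposition w = x φ^μ y: μ dominant, φ^μ y of minimal length in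
W₀·(φ^μ y), and x φ^μ y = w. Writing w = u φ^lam, one has x φ^μ y = (xy) φ^{μ∘y}, and
z·(φ^μ y) = (zy) φ^{μ∘y}. -/
def IsMinDecomp {n : ℕ} (u : Equiv.Perm (Fin n)) (lam : Fin n → ℤ)
    (t : Equiv.Perm (Fin n) × (Fin n → ℤ) × Equiv.Perm (Fin n)) : Prop :=
  (∀ i j : Fin n, i ≤ j → t.2.1 j ≤ t.2.1 i) ∧
  (∀ z : Equiv.Perm (Fin n),
    affLen t.2.2 (t.2.1 ∘ ⇑t.2.2) ≤ affLen (z * t.2.2) (t.2.1 ∘ ⇑t.2.2)) ∧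
  u = t.1 * t.2.2 ∧ lam = t.2.1 ∘ ⇑t.2.2

namespace Stmt9

variable {n : ℕ}

@[simp] lemma perm_apply_inv_self {α : Type*} (f : Equiv.Perm α) (x : α) : f (f⁻¹ x) = x :=
  Equiv.apply_symm_apply f x

/-- the inversion pattern of a global minimizer of `affLen · lam` -/
def Pat (w : Equiv.Perm (Fin n)) (lam : Fin n → ℤ) : Prop :=
  ∀ i j : Fin n, i < j → (w j < w i ↔ lam i < lam j)

noncomputable def M (lam : Fin n → ℤ) : ℤ :=
  ∑ p ∈ Finset.univ.filter (fun p : Fin n × Fin n => p.1 < p.2),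
    (if lam p.1 < lam p.2 then |lam p.1 - lam p.2 + 1| else |lam p.1 - lam p.2|)

lemma term_le (w : Equiv.Perm (Fin n)) (lam : Fin n → ℤ) (p : Fin n × Fin n) :
    (if lam p.1 < lam p.2 then |lam p.1 - lam p.2 + 1| else |lam p.1 - lam p.2|) ≤
    (if w p.2 < w p.1 then |lam p.1 - lam p.2 + 1| else |lam p.1 - lam p.2|) := by
  rcases abs_cases (lam p.1 - lam p.2 + 1) with ⟨h1, h2⟩ | ⟨h1, h2⟩ <;>
    rcases abs_cases (lam p.1 - lam p.2) with ⟨h3, h4⟩ | ⟨h3, h4⟩ <;>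
    split_ifs <;> omega

lemma M_le (w : Equiv.Perm (Fin n)) (lam : Fin n → ℤ) : M lam ≤ affLen w lam :=
  Finset.sum_le_sum fun p _ => term_le w lam p

lemma affLen_eq_M_iff (w : Equiv.Perm (Fin n)) (lam : Fin n → ℤ) :
    affLen w lam = M lam ↔ Pat w lam := by
  constructor
  · intro h
    have hkey := (Finset.sum_eq_sum_iff_of_le (fun p _ => term_le w lam p)).mp h.symm
    intro i j hij
    have hmem : (i, j) ∈ Finset.univ.filter (fun p : Fin n × Fin n => p.1 < p.2) := by
      simp [hij]
    have := hkey (i, j) hmem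
    simp only at this
    rcases abs_cases (lam i - lam j + 1) with ⟨h1, h2⟩ | ⟨h1, h2⟩ <;>
      rcases abs_cases (lam i - lam j) with ⟨h3, h4⟩ | ⟨h3, h4⟩ <;>
      constructor <;> intro hh <;> by_contra hc <;> simp_all <;> omega
  · intro h
    apply Finset.sum_congr rfl
    intro p hp
    have hp' : p.1 < p.2 := by simpa using hp
    have := h p.1 p.2 hp'
    split_ifs with h1 h2 h2 <;> tauto

noncomputable def key (lam : Fin n → ℤ) : Fin n → ℤ ×ₗ Fin n :=
  fun i => toLex (-lam i, i)

lemma key_injective (lam : Fin n → ℤ) : Function.Injective (key lam) := by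
  intro i j h
  have := congrArg (fun p => (ofLex p).2) h
  simpa [key] using this

noncomputable def sortPerm (lam : Fin n → ℤ) : Equiv.Perm (Fin n) :=
  (Tuple.sort (key lam))⁻¹

lemma sortPerm_lt_iff (lam : Fin n → ℤ) (i j : Fin n) :
    sortPerm lam i < sortPerm lam j ↔ key lam i < key lam j := by
  have hmono : StrictMono (key lam ∘ Tuple.sort (key lam)) :=
    (Tuple.monotone_sort (key lam)).strictMono_of_injective
      ((key_injective lam).comp (Equiv.injective _))
  have hi : key lam i = (key lam ∘ Tuple.sort (key lam)) (sortPerm lam i) := by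
    simp [sortPerm]
  have hj : key lam j = (key lam ∘ Tuple.sort (key lam)) (sortPerm lam j) := by
    simp [sortPerm]
  rw [hi, hj]
  exact (hmono.lt_iff_lt).symm

lemma pat_sortPerm (lam : Fin n → ℤ) : Pat (sortPerm lam) lam := by
  intro i j hij
  rw [sortPerm_lt_iff]
  simp only [key]
  rw [Prod.Lex.lt_iff]
  simp only [ofLex_toLex]
  constructor
  · rintro (h | ⟨h1, h2⟩)
    · omega
    · exact absurd h2 hij.asymm
  · intro h; left; omega

lemma pat_unique {w w' : Equiv.Perm (Fin n)} {lam : Fin n → ℤ}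
    (hw : Pat w lam) (hw' : Pat w' lam) : w = w' := by
  have hkey : ∀ i j : Fin n, w' i < w' j → w i < w j := by
    intro i j h
    rcases lt_trichotomy i j with hij | rfl | hij
    · have h1 := hw i j hij
      have h2 := hw' i j hij
      have hne : w i ≠ w j := fun hc => hij.ne (w.injective hc)
      have : ¬ w j < w i := fun hc => h.asymm ((h2.mpr (h1.mp hc)))
      exact lt_of_le_of_ne (not_lt.mp this) hne
    · exact absurd h (lt_irrefl _)
    · exact (hw j i hij).mpr ((hw' j i hij).mp h)
  have hmono : StrictMono ⇑(w * w'⁻¹) := by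
    intro a b hab
    have : w' (w'⁻¹ a) < w' (w'⁻¹ b) := by simpa using hab
    simpa using hkey _ _ this
  have hrange : Set.range ⇑(w * w'⁻¹) = Set.range (id : Fin n → Fin n) := by
    rw [Set.range_eq_univ.mpr (w * w'⁻¹).surjective, Set.range_id]
  haveI : WellFoundedLT (Fin n) := inferInstance
  have hid : ⇑(w * w'⁻¹) = id := (hmono.range_inj strictMono_id).mp hrange
  apply Equiv.ext
  intro i
  have := congrFun hid (w' i)
  simpa using this

lemma sum_pairs_reindex (y : Equiv.Perm (Fin n)) (F : Fin n → Fin n → ℤ) :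
    ∑ p ∈ Finset.univ.filter (fun p : Fin n × Fin n => p.1 < p.2), F p.1 p.2 =
    ∑ p ∈ Finset.univ.filter (fun p : Fin n × Fin n => p.1 < p.2),
      (if y⁻¹ p.1 < y⁻¹ p.2 then F (y⁻¹ p.1) (y⁻¹ p.2) else F (y⁻¹ p.2) (y⁻¹ p.1)) := by
  apply Finset.sum_nbij'
    (i := fun p : Fin n × Fin n => if y p.1 < y p.2 then (y p.1, y p.2) else (y p.2, y p.1))
    (j := fun p : Fin n × Fin n =>
      if y⁻¹ p.1 < y⁻¹ p.2 then (y⁻¹ p.1, y⁻¹ p.2) else (y⁻¹ p.2, y⁻¹ p.1))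
  · intro p hp
    have hp' : p.1 < p.2 := by simpa using hp
    have hne : y p.1 ≠ y p.2 := fun h => hp'.ne (y.injective h)
    simp only [Finset.mem_filter, Finset.mem_univ, true_and]
    split_ifs with h
    · exact h
    · exact lt_of_le_of_ne (not_lt.mp h) (Ne.symm hne)
  · intro p hp
    have hp' : p.1 < p.2 := by simpa using hp
    have hne : y⁻¹ p.1 ≠ y⁻¹ p.2 := fun h => hp'.ne (y⁻¹.injective h)
    simp only [Finset.mem_filter, Finset.mem_univ, true_and]
    split_ifs with h
    · exact h
    · exact lt_of_le_of_ne (not_lt.mp h) (Ne.symm hne)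
  · intro p hp
    have hp' : p.1 < p.2 := by simpa using hp
    have has : ¬ p.2 < p.1 := hp'.asymm
    split_ifs <;> simp_all <;> exact absurd hp' (asymm ‹p.2 < p.1›)
  · intro p hp
    have hp' : p.1 < p.2 := by simpa using hp
    have has : ¬ p.2 < p.1 := hp'.asymm
    split_ifs <;> simp_all <;> exact absurd hp' (asymm ‹p.2 < p.1›)
  · intro p hp
    have hp' : p.1 < p.2 := by simpa using hp
    have has : ¬ p.2 < p.1 := hp'.asymm
    split_ifs <;> simp_all <;> exact absurd hp' (asymm ‹p.2 < p.1›)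

end Stmt9

theorem stmt_9 (n : ℕ) (hn : 0 < n) (u : Equiv.Perm (Fin n)) (lam : Fin n → ℤ) :
    (∃! t : Equiv.Perm (Fin n) × (Fin n → ℤ) × Equiv.Perm (Fin n),
        IsMinDecomp u lam t) ∧
    (∀ t : Equiv.Perm (Fin n) × (Fin n → ℤ) × Equiv.Perm (Fin n), IsMinDecomp u lam t →
      affLen u lam = affLen t.1 0 +
        (∑ p ∈ Finset.univ.filter (fun p : Fin n × Fin n => p.1 < p.2),
          (t.2.1 p.1 - t.2.1 p.2)) - affLen t.2.2 0) := by
  classical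
  set y₀ : Equiv.Perm (Fin n) := Stmt9.sortPerm lam with hy₀def
  have hpat₀ : Stmt9.Pat y₀ lam := Stmt9.pat_sortPerm lam
  have hA₀ : affLen y₀ lam = Stmt9.M lam := (Stmt9.affLen_eq_M_iff y₀ lam).mpr hpat₀
  -- any decomposition satisfies Pat t.2.2 lam, and is determined
  have hpat_of : ∀ t : Equiv.Perm (Fin n) × (Fin n → ℤ) × Equiv.Perm (Fin n),
      IsMinDecomp u lam t → Stmt9.Pat t.2.2 lam := by
    rintro ⟨x, μ, y⟩ ⟨hdom, hmin, hu, hlam⟩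
    simp only at hmin hlam ⊢
    rw [← hlam] at hmin
    have h1 : affLen y lam ≤ affLen y₀ lam := by
      have := hmin (y₀ * y⁻¹)
      simpa [mul_assoc] using this
    have h2 : affLen y lam = Stmt9.M lam :=
      le_antisymm (h1.trans_eq hA₀) (Stmt9.M_le y lam)
    exact (Stmt9.affLen_eq_M_iff y lam).mp h2
  have hext : ∀ t : Equiv.Perm (Fin n) × (Fin n → ℤ) × Equiv.Perm (Fin n),
      IsMinDecomp u lam t → t = (u * y₀⁻¹, lam ∘ ⇑y₀⁻¹, y₀) := by
    intro t ht
    have hy : t.2.2 = y₀ := Stmt9.pat_unique (hpat_of t ht) hpat₀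
    obtain ⟨hdom, hmin, hu, hlam⟩ := ht
    have hμ : t.2.1 = lam ∘ ⇑y₀⁻¹ := by
      funext i
      have := congrFun hlam (y₀⁻¹ i)
      simp only [Function.comp_apply, hy] at this ⊢
      rw [this, Stmt9.perm_apply_inv_self]
    have hx : t.1 = u * y₀⁻¹ := by
      rw [hu, hy, mul_assoc, mul_inv_cancel, mul_one]
    exact Prod.ext hx (Prod.ext hμ hy)
  have hcomp : (lam ∘ ⇑y₀⁻¹) ∘ ⇑y₀ = lam := by
    funext i; simp
  have hexists : IsMinDecomp u lam (u * y₀⁻¹, lam ∘ ⇑y₀⁻¹, y₀) := by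
    refine ⟨?_, ?_, ?_, ?_⟩
    · -- dominance
      intro i j hij
      simp only [Function.comp_apply]
      rcases hij.lt_or_eq with hlt | heq
      · rcases lt_trichotomy (y₀⁻¹ i) (y₀⁻¹ j) with hab | hab | hab
        · have hiff := hpat₀ (y₀⁻¹ i) (y₀⁻¹ j) hab
          simp only [Stmt9.perm_apply_inv_self] at hiff
          have : ¬ lam (y₀⁻¹ i) < lam (y₀⁻¹ j) := fun hc => (hiff.mpr hc).asymm hlt
          exact not_lt.mp this
        · rw [hab]
        · have hiff := hpat₀ (y₀⁻¹ j) (y₀⁻¹ i) hab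
          simp only [Stmt9.perm_apply_inv_self] at hiff
          exact (hiff.mp hlt).le
      · rw [heq]
    · -- minimality
      intro z
      simp only [hcomp]
      exact hA₀.trans_le (Stmt9.M_le (z * y₀) lam)
    · simp [mul_assoc]
    · exact hcomp.symm
  constructor
  · exact ⟨(u * y₀⁻¹, lam ∘ ⇑y₀⁻¹, y₀), hexists, fun t ht => hext t ht⟩
  · -- the length formula
    rintro ⟨x, μ, y⟩ ht
    have hpat : Stmt9.Pat y lam := hpat_of _ ht
    obtain ⟨hdom, hmin, hu, hlam⟩ := ht
    simp only at hu hlam hpat ⊢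
    subst hu hlam
    -- rewrite LHS by reindexing along y
    have h1 : affLen (x * y) (μ ∘ ⇑y) =
        ∑ p ∈ Finset.univ.filter (fun p : Fin n × Fin n => p.1 < p.2),
          (if y⁻¹ p.1 < y⁻¹ p.2 then
            (if (x * y) (y⁻¹ p.2) < (x * y) (y⁻¹ p.1) then
              |(μ ∘ ⇑y) (y⁻¹ p.1) - (μ ∘ ⇑y) (y⁻¹ p.2) + 1|
            else |(μ ∘ ⇑y) (y⁻¹ p.1) - (μ ∘ ⇑y) (y⁻¹ p.2)|)
          else
            (if (x * y) (y⁻¹ p.1) < (x * y) (y⁻¹ p.2) then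
              |(μ ∘ ⇑y) (y⁻¹ p.2) - (μ ∘ ⇑y) (y⁻¹ p.1) + 1|
            else |(μ ∘ ⇑y) (y⁻¹ p.2) - (μ ∘ ⇑y) (y⁻¹ p.1)|)) :=
      Stmt9.sum_pairs_reindex y (fun i j =>
        if (x * y) j < (x * y) i then |(μ ∘ ⇑y) i - (μ ∘ ⇑y) j + 1|
        else |(μ ∘ ⇑y) i - (μ ∘ ⇑y) j|)
    simp only [Equiv.Perm.mul_apply, Function.comp_apply, Stmt9.perm_apply_inv_self] at h1
    have h2 : affLen y (0 : Fin n → ℤ) =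
        ∑ p ∈ Finset.univ.filter (fun p : Fin n × Fin n => p.1 < p.2),
          (if y⁻¹ p.1 < y⁻¹ p.2 then
            (if y (y⁻¹ p.2) < y (y⁻¹ p.1) then |(0:ℤ) - 0 + 1| else |(0:ℤ) - 0|)
          else
            (if y (y⁻¹ p.1) < y (y⁻¹ p.2) then |(0:ℤ) - 0 + 1| else |(0:ℤ) - 0|)) :=
      Stmt9.sum_pairs_reindex y (fun i j =>
        if y j < y i then |(0:ℤ) - 0 + 1| else |(0:ℤ) - 0|)
    have h3 : affLen x (0 : Fin n → ℤ) =
        ∑ p ∈ Finset.univ.filter (fun p : Fin n × Fin n => p.1 < p.2),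
          (if x p.2 < x p.1 then (1:ℤ) else 0) := by
      unfold affLen
      apply Finset.sum_congr rfl
      intro p _
      norm_num
    rw [h1, h2, h3, ← Finset.sum_add_distrib, ← Finset.sum_sub_distrib]
    apply Finset.sum_congr rfl
    intro p hp
    have hp' : p.1 < p.2 := by simpa using hp
    simp only [Stmt9.perm_apply_inv_self]
    by_cases h : y⁻¹ p.1 < y⁻¹ p.2
    · have hiff := hpat (y⁻¹ p.1) (y⁻¹ p.2) h
      simp only [Function.comp_apply, Stmt9.perm_apply_inv_self] at hiff
      have hμ : ¬ μ p.1 < μ p.2 := fun hc => (hiff.mpr hc).asymm hp'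
      rw [if_pos h, if_pos h, if_neg hp'.asymm]
      norm_num
      rcases abs_cases (μ p.1 - μ p.2 + 1) with ⟨e1, e2⟩ | ⟨e1, e2⟩ <;>
        rcases abs_cases (μ p.1 - μ p.2) with ⟨e3, e4⟩ | ⟨e3, e4⟩ <;>
        split_ifs <;> omega
    · have hne : y⁻¹ p.1 ≠ y⁻¹ p.2 := fun hc => hp'.ne (y⁻¹.injective hc)
      have hlt : y⁻¹ p.2 < y⁻¹ p.1 := lt_of_le_of_ne (not_lt.mp h) (Ne.symm hne)
      have hiff := hpat (y⁻¹ p.2) (y⁻¹ p.1) hlt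
      simp only [Function.comp_apply, Stmt9.perm_apply_inv_self] at hiff
      have hμ : μ p.2 < μ p.1 := hiff.mp hp'
      rw [if_neg h, if_neg h, if_pos hp']
      norm_num
      have hx : x p.1 ≠ x p.2 := fun hc => hp'.ne (x.injective hc)
      rcases hx.lt_or_gt with hx1 | hx1
      · rw [if_pos hx1, if_neg (asymm hx1)]
        rcases abs_cases (μ p.2 - μ p.1 + 1) with ⟨e1, e2⟩ | ⟨e1, e2⟩ <;> omega
      · rw [if_neg (asymm hx1), if_pos hx1]
        rcases abs_cases (μ p.2 - μ p.1) with ⟨e1, e2⟩ | ⟨e1, e2⟩ <;> omega
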